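/- Let A be an m × n complex matrix and P an m × m permutation matrix. Let U be an m × k complex matrix with orthonormal columns (U*U = I_k), C an invertible k × k matrix, L₁ = U·C, let Ω₂ be a q × m complex matrix, W a k × q matrix with W·(Ω₂·U) = I_k, and set M = C⁻¹·W. Suppose there exists a k × m matrix N and a constant E ≥ 0 such that ‖P·A − L₁·N·(P·A)‖_F ≤ E. Then ‖L₁·M·Ω₂·(P·A) − P·A‖_F ≤ (‖W‖₂·‖Ω₂‖₂ + 1)·E. -/

import Mathlib

set_option maxHeartbeats 800000

open Matrix

/-- The Frobenius norm of a complex matrix. -/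
noncomputable def frobNorm {m n : ℕ} (A : Matrix (Fin m) (Fin n) ℂ) : ℝ :=
  Real.sqrt (∑ i, ∑ j, ‖A i j‖ ^ 2)

/-- The spectral (operator) norm of a complex matrix, viewed as a linear map
between Euclidean spaces. -/
noncomputable def opNorm {m n : ℕ} (A : Matrix (Fin m) (Fin n) ℂ) : ℝ :=
  ‖LinearMap.toContinuousLinearMap (Matrix.toEuclideanLin A)‖

section OpNormLemmas

open scoped Matrix.Norms.L2Operator

lemma opNorm_eq_l2 {a b : ℕ} (A : Matrix (Fin a) (Fin b) ℂ) : opNorm A = ‖A‖ := rfl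

lemma opNorm_nonneg' {a b : ℕ} (A : Matrix (Fin a) (Fin b) ℂ) : 0 ≤ opNorm A := by
  rw [opNorm_eq_l2]; exact norm_nonneg _

lemma opNorm_one_le {a : ℕ} : opNorm (1 : Matrix (Fin a) (Fin a) ℂ) ≤ 1 := by
  have h : (LinearMap.toContinuousLinearMap
      (Matrix.toEuclideanLin (1 : Matrix (Fin a) (Fin a) ℂ))) =
      ContinuousLinearMap.id ℂ (EuclideanSpace ℂ (Fin a)) := by
    ext x i
    simp [Matrix.toEuclideanLin_apply, Matrix.one_mulVec]
  rw [opNorm, h]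
  exact ContinuousLinearMap.norm_id_le

lemma opNorm_isometry_le_one {a b : ℕ} (U : Matrix (Fin a) (Fin b) ℂ)
    (hU : Uᴴ * U = 1) : opNorm U ≤ 1 := by
  have h1 : opNorm U * opNorm U ≤ 1 := by
    rw [opNorm_eq_l2]
    calc ‖U‖ * ‖U‖ = ‖Uᴴ * U‖ := (Matrix.l2_opNorm_conjTranspose_mul_self U).symm
    _ = ‖(1 : Matrix (Fin b) (Fin b) ℂ)‖ := by rw [hU]
    _ ≤ 1 := by rw [← opNorm_eq_l2]; exact opNorm_one_le
  nlinarith [opNorm_nonneg' U]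

lemma opNorm_mulVec_le {a b : ℕ} (X : Matrix (Fin a) (Fin b) ℂ)
    (v : EuclideanSpace ℂ (Fin b)) :
    ‖(EuclideanSpace.equiv (Fin a) ℂ).symm (X *ᵥ v)‖ ≤ opNorm X * ‖v‖ := by
  rw [opNorm_eq_l2]; exact Matrix.l2_opNorm_mulVec X v

end OpNormLemmas

section FrobLemmas

attribute [local instance] Matrix.frobeniusNormedAddCommGroup

lemma frobNorm_eq {a b : ℕ} (A : Matrix (Fin a) (Fin b) ℂ) : frobNorm A = ‖A‖ := by
  rw [Matrix.frobenius_norm_def, frobNorm, Real.sqrt_eq_rpow]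
  norm_num [Real.rpow_two]

lemma frobNorm_nonneg {a b : ℕ} (A : Matrix (Fin a) (Fin b) ℂ) : 0 ≤ frobNorm A :=
  Real.sqrt_nonneg _

lemma frobNorm_sub_le {a b : ℕ} (A B : Matrix (Fin a) (Fin b) ℂ) :
    frobNorm (A - B) ≤ frobNorm A + frobNorm B := by
  simp only [frobNorm_eq]; exact norm_sub_le A B

lemma frobNorm_sq {a b : ℕ} (A : Matrix (Fin a) (Fin b) ℂ) :
    frobNorm A ^ 2 = ∑ i, ∑ j, ‖A i j‖ ^ 2 := by
  rw [frobNorm, Real.sq_sqrt]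
  positivity

end FrobLemmas

lemma col_bound {a b c : ℕ} (X : Matrix (Fin a) (Fin b) ℂ)
    (Y : Matrix (Fin b) (Fin c) ℂ) (j : Fin c) :
    ∑ i, ‖(X * Y) i j‖ ^ 2 ≤ opNorm X ^ 2 * ∑ i, ‖Y i j‖ ^ 2 := by
  set v : EuclideanSpace ℂ (Fin b) :=
    (WithLp.equiv 2 (Fin b → ℂ)).symm (fun i => Y i j) with hvdef
  have hv : ‖v‖ ^ 2 = ∑ i, ‖Y i j‖ ^ 2 := by
    rw [EuclideanSpace.norm_eq, Real.sq_sqrt (by positivity)]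
    simp [hvdef, PiLp.toLp_apply]
  have hle : ‖Matrix.toEuclideanLin X v‖ ≤ opNorm X * ‖v‖ := by
    have h := (LinearMap.toContinuousLinearMap (Matrix.toEuclideanLin X)).le_opNorm v
    simpa [opNorm] using h
  have hXv : ‖Matrix.toEuclideanLin X v‖ ^ 2 = ∑ i, ‖(X * Y) i j‖ ^ 2 := by
    rw [EuclideanSpace.norm_eq, Real.sq_sqrt (by positivity)]
    refine Finset.sum_congr rfl fun i _ => ?_
    congr 1
  rw [← hXv, ← hv]
  have h0 : (0:ℝ) ≤ ‖Matrix.toEuclideanLin X v‖ := norm_nonneg _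
  nlinarith [norm_nonneg v, opNorm_nonneg' X]

/-- Frobenius norm of a product is bounded by op norm times Frobenius norm. -/
lemma frobNorm_mul_le_opNorm {a b c : ℕ} (X : Matrix (Fin a) (Fin b) ℂ)
    (Y : Matrix (Fin b) (Fin c) ℂ) :
    frobNorm (X * Y) ≤ opNorm X * frobNorm Y := by
  have hXY : frobNorm (X * Y) ^ 2 ≤ (opNorm X * frobNorm Y) ^ 2 := by
    calc frobNorm (X * Y) ^ 2 = ∑ j, ∑ i, ‖(X * Y) i j‖ ^ 2 := by
          rw [frobNorm_sq]; exact Finset.sum_comm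
    _ ≤ ∑ j : Fin c, opNorm X ^ 2 * ∑ i, ‖Y i j‖ ^ 2 :=
          Finset.sum_le_sum fun j _ => col_bound X Y j
    _ = opNorm X ^ 2 * ∑ j, ∑ i, ‖Y i j‖ ^ 2 := by rw [Finset.mul_sum]
    _ = (opNorm X * frobNorm Y) ^ 2 := by
          rw [mul_pow, frobNorm_sq]
          congr 1
          exact Finset.sum_comm
  have h1 : 0 ≤ opNorm X * frobNorm Y :=
    mul_nonneg (opNorm_nonneg' X) (frobNorm_nonneg Y)
  nlinarith [frobNorm_nonneg (X * Y)]

theorem oblique_projection_error_bound {m n k q : ℕ}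
    (A : Matrix (Fin m) (Fin n) ℂ) (P : Matrix (Fin m) (Fin m) ℂ)
    (hP : ∃ σ : Equiv.Perm (Fin m), ∀ i j, P i j = if σ i = j then 1 else 0)
    (U : Matrix (Fin m) (Fin k) ℂ) (hU : Uᴴ * U = 1)
    (C : Matrix (Fin k) (Fin k) ℂ) (hC : IsUnit C)
    (L₁ : Matrix (Fin m) (Fin k) ℂ) (hL : L₁ = U * C)
    (Ω₂ : Matrix (Fin q) (Fin m) ℂ)
    (W : Matrix (Fin k) (Fin q) ℂ) (hW : W * (Ω₂ * U) = 1)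
    (M : Matrix (Fin k) (Fin q) ℂ) (hM : M = C⁻¹ * W)
    (N : Matrix (Fin k) (Fin m) ℂ) (E : ℝ) (hE : 0 ≤ E)
    (hN : frobNorm (P * A - L₁ * N * (P * A)) ≤ E) :
    frobNorm (L₁ * M * Ω₂ * (P * A) - P * A) ≤ (opNorm W * opNorm Ω₂ + 1) * E := by
  set R : Matrix (Fin m) (Fin n) ℂ := P * A - L₁ * N * (P * A) with hR
  have hCC : C * C⁻¹ = 1 := Matrix.mul_nonsing_inv C ((Matrix.isUnit_iff_isUnit_det C).mp hC)
  have hLM : L₁ * M = U * W := by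
    rw [hL, hM, Matrix.mul_assoc, ← Matrix.mul_assoc C, hCC, Matrix.one_mul]
  -- collapse lemma
  have hWX : ∀ (p : ℕ) (X : Matrix (Fin k) (Fin p) ℂ), W * (Ω₂ * (U * X)) = X := by
    intro p X
    rw [← Matrix.mul_assoc Ω₂, ← Matrix.mul_assoc W, hW, Matrix.one_mul]
  have key : L₁ * M * Ω₂ * (P * A) - P * A = U * (W * (Ω₂ * R)) - R := by
    rw [hR, hLM, hL]
    have h1 : W * (Ω₂ * (P * A - U * C * N * (P * A))) =
        W * (Ω₂ * (P * A)) - C * N * (P * A) := by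
      rw [Matrix.mul_sub, Matrix.mul_sub]
      congr 1
      have : U * C * N * (P * A) = U * (C * N * (P * A)) := by
        simp only [Matrix.mul_assoc]
      rw [this, hWX]
    rw [h1, Matrix.mul_sub]
    have h2 : U * (C * N * (P * A)) = U * C * N * (P * A) := by
      simp only [Matrix.mul_assoc]
    rw [h2]
    have h3 : U * (W * (Ω₂ * (P * A))) = U * W * Ω₂ * (P * A) := by
      simp only [Matrix.mul_assoc]
    rw [h3]
    abel
  rw [key]
  have hstep1 : frobNorm (U * (W * (Ω₂ * R)) - R) ≤
      frobNorm (U * (W * (Ω₂ * R))) + frobNorm R := frobNorm_sub_le _ _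
  have hU1 : opNorm U ≤ 1 := opNorm_isometry_le_one U hU
  have hRE : frobNorm R ≤ E := hN
  have c1 : frobNorm (U * (W * (Ω₂ * R))) ≤ opNorm W * opNorm Ω₂ * E := by
    calc frobNorm (U * (W * (Ω₂ * R))) ≤ opNorm U * frobNorm (W * (Ω₂ * R)) :=
          frobNorm_mul_le_opNorm _ _
    _ ≤ 1 * frobNorm (W * (Ω₂ * R)) := by
        exact mul_le_mul_of_nonneg_right hU1 (frobNorm_nonneg _)
    _ = frobNorm (W * (Ω₂ * R)) := one_mul _
    _ ≤ opNorm W * frobNorm (Ω₂ * R) := frobNorm_mul_le_opNorm _ _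
    _ ≤ opNorm W * (opNorm Ω₂ * frobNorm R) := by
        exact mul_le_mul_of_nonneg_left (frobNorm_mul_le_opNorm _ _) (opNorm_nonneg' W)
    _ ≤ opNorm W * (opNorm Ω₂ * E) := by
        refine mul_le_mul_of_nonneg_left ?_ (opNorm_nonneg' W)
        exact mul_le_mul_of_nonneg_left hRE (opNorm_nonneg' Ω₂)
    _ = opNorm W * opNorm Ω₂ * E := by ring
  calc frobNorm (U * (W * (Ω₂ * R)) - R) ≤ frobNorm (U * (W * (Ω₂ * R))) + frobNorm R :=
        hstep1
  _ ≤ opNorm W * opNorm Ω₂ * E + E := add_le_add c1 hRE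
  _ = (opNorm W * opNorm Ω₂ + 1) * E := by ring
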